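/- There exists a universal constant C > 0 such that the following holds (Case IVb). Let n ≥ 3, t > 0, r ∈ (1/4,1/2], p = 2(1−r), assume (1−2r)·ln n < e, and let X be a random vector in ℝ^n with the standard normal distribution. Then: (i) for every x ∈ ℝ^n, ∑_{i=1}^{n} i^{-2r}·x_[i]^{2(p-1)} ≤ C·(ln n)·|x|^{2(p-1)}, where |·| is the Euclidean norm; (ii) with probability at least 1 − C·exp(−t²/2), |X| ≤ C·n^{1/2} + t, and consequently ∑_{i=1}^{n} i^{-2r}·X_[i]^{2(p-1)} ≤ C·(ln n)·t^{2(p-1)}. -/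

import Mathlib

open MeasureTheory ProbabilityTheory
open Real
open scoped ENNReal NNReal

private lemma pi_prod_integrable {μ : Measure ℝ} [SigmaFinite μ] {f : ℝ → ℝ}
    (hf : Integrable f μ) (n : ℕ) :
    Integrable (fun x : Fin n → ℝ => ∏ i, f (x i)) (Measure.pi fun _ => μ) := by
  induction n with
  | zero =>
      rw [Measure.pi_of_empty]
      simp only [Finset.univ_eq_empty, Finset.prod_empty]
      exact integrable_const _
  | succ n ih =>
      have h := (measurePreserving_piFinSuccAbove (fun _ : Fin (n + 1) => μ) 0).symm
      rw [← h.integrable_comp_emb (MeasurableEquiv.measurableEmbedding _)]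
      simp_rw [MeasurableEquiv.piFinSuccAbove_symm_apply, Fin.insertNthEquiv,
        Fin.prod_univ_succ, Fin.insertNth_zero]
      simp only [Fin.zero_succAbove, Nat.cast_id, Function.comp_def, Fin.cons_zero, Fin.cons_succ,
        Equiv.coe_fn_mk]
      exact Integrable.mul_prod hf ih

private lemma pi_prod_integral {μ : Measure ℝ} [SigmaFinite μ] (f : ℝ → ℝ) (n : ℕ) :
    ∫ x : Fin n → ℝ, ∏ i, f (x i) ∂(Measure.pi fun _ => μ) = (∫ y, f y ∂μ) ^ n := by
  induction n with
  | zero =>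
      rw [Measure.pi_of_empty]
      simp
  | succ n ih =>
      calc ∫ x : Fin (n + 1) → ℝ, ∏ i, f (x i) ∂(Measure.pi fun _ => μ)
          = ∫ p : ℝ × (Fin n → ℝ), f p.1 * ∏ i : Fin n, f (p.2 i)
            ∂(μ.prod (Measure.pi fun _ => μ)) := by
            rw [← ((measurePreserving_piFinSuccAbove (fun _ : Fin (n + 1) => μ) 0).symm).integral_comp']
            simp_rw [MeasurableEquiv.piFinSuccAbove_symm_apply, Fin.insertNthEquiv,
              Fin.prod_univ_succ, Fin.insertNth_zero]
            simp only [Fin.zero_succAbove, cast_eq, Nat.cast_id, Function.comp_def, Fin.cons_zero,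
              Fin.cons_succ, Equiv.coe_fn_mk]
        _ = (∫ y, f y ∂μ) * (∫ y, f y ∂μ) ^ n := by rw [integral_prod_mul (f := f) (g := fun y : Fin n → ℝ => ∏ i, f (y i)), ih]
        _ = (∫ y, f y ∂μ) ^ (n + 1) := by ring

private lemma key_fun_eq {c : ℝ} (x : ℝ) :
    (gaussianPDFReal 0 1 x).toNNReal • rexp (c * x ^ 2)
      = (√(2 * π))⁻¹ * rexp (-(1 / 2 - c) * x ^ 2) := by
  rw [NNReal.smul_def, Real.coe_toNNReal _ (gaussianPDFReal_nonneg 0 1 x), gaussianPDFReal]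
  simp only [NNReal.coe_one, mul_one, sub_zero]
  rw [smul_eq_mul, mul_assoc, ← Real.exp_add]
  congr 2
  ring

private lemma integrable_exp_mul_sq_gaussian {c : ℝ} (hc : c < 1 / 2) :
    Integrable (fun x => rexp (c * x ^ 2)) (gaussianReal 0 1) := by
  have hb : (0 : ℝ) < 1 / 2 - c := by linarith
  rw [gaussianReal_of_var_ne_zero 0 one_ne_zero]
  have hm : Measurable fun x => (gaussianPDFReal 0 1 x).toNNReal :=
    (measurable_gaussianPDFReal 0 1).real_toNNReal
  rw [(show gaussianPDF 0 1 = fun x => ((gaussianPDFReal 0 1 x).toNNReal : ℝ≥0∞) from rfl),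
    integrable_withDensity_iff_integrable_smul hm]
  have h : (fun x => (gaussianPDFReal 0 1 x).toNNReal • rexp (c * x ^ 2))
      = fun x => (√(2 * π))⁻¹ * rexp (-(1 / 2 - c) * x ^ 2) := funext fun x => key_fun_eq x
  rw [h]
  exact (integrable_exp_neg_mul_sq hb).const_mul _

private lemma integral_exp_mul_sq_gaussian {c : ℝ} (hc : c < 1 / 2) :
    ∫ x, rexp (c * x ^ 2) ∂(gaussianReal 0 1) = √(1 - 2 * c)⁻¹ := by
  have hb : (0 : ℝ) < 1 / 2 - c := by linarith
  rw [gaussianReal_of_var_ne_zero 0 one_ne_zero]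
  have hm : Measurable fun x => (gaussianPDFReal 0 1 x).toNNReal :=
    (measurable_gaussianPDFReal 0 1).real_toNNReal
  rw [(show gaussianPDF 0 1 = fun x => ((gaussianPDFReal 0 1 x).toNNReal : ℝ≥0∞) from rfl),
    integral_withDensity_eq_integral_smul hm]
  simp_rw [key_fun_eq]
  rw [integral_const_mul, integral_gaussian, ← Real.sqrt_inv,
    ← Real.sqrt_mul (by positivity : (0:ℝ) ≤ (2 * π)⁻¹)]
  congr 1
  have hπ : π ≠ 0 := Real.pi_ne_zero
  have h1 : (1:ℝ) - 2 * c ≠ 0 := by linarith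
  have h2 : π * 2 - π * c * 4 ≠ 0 := by
    have : π * 2 - π * c * 4 = π * (2 - 4 * c) := by ring
    rw [this]
    exact mul_ne_zero hπ (by linarith)
  field_simp

private lemma chernoff_norm (n : ℕ) (hn : 1 ≤ n) {t : ℝ} (ht : 0 < t) :
    ((Measure.pi fun _ : Fin n => gaussianReal 0 1)
      {x | Real.sqrt n + t < Real.sqrt (∑ i, x i ^ 2)}).toReal ≤ rexp (-t ^ 2 / 2) := by
  set P : Measure (Fin n → ℝ) := Measure.pi fun _ : Fin n => gaussianReal 0 1 with hP
  haveI : IsProbabilityMeasure P := by rw [hP]; infer_instance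
  set s : ℝ := Real.sqrt n with hsdef
  have hs : 0 < s := Real.sqrt_pos.mpr (by positivity)
  have hn' : (n : ℝ) = s ^ 2 := (Real.sq_sqrt (by positivity)).symm
  set aa : ℝ := (s + t) ^ 2 with haadef
  have haa : 0 < aa := by positivity
  have hna : (n : ℝ) ≤ aa := by rw [hn']; nlinarith
  set c : ℝ := (1 - n / aa) / 2 with hcdef
  have hc0 : 0 ≤ c := by
    have : (n : ℝ) / aa ≤ 1 := (div_le_one haa).mpr hna
    rw [hcdef]; linarith
  have hc : c < 1 / 2 := by
    have : 0 < (n : ℝ) / aa := by positivity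
    rw [hcdef]; linarith
  set Y : (Fin n → ℝ) → ℝ := fun x => ∑ i, x i ^ 2 with hYdef
  have hYnn : ∀ x, 0 ≤ Y x := fun x => Finset.sum_nonneg fun i _ => sq_nonneg _
  have hsub : {x | s + t < Real.sqrt (Y x)} ⊆ {x | aa ≤ Y x} := by
    intro x hx
    have h1 : (s + t) ^ 2 < Real.sqrt (Y x) ^ 2 :=
      pow_lt_pow_left₀ hx (by positivity) (by norm_num)
    rw [Real.sq_sqrt (hYnn x)] at h1
    exact le_of_lt h1
  have hexpand : (fun x => rexp (c * Y x)) = fun x => ∏ i, rexp (c * x i ^ 2) := by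
    funext x
    rw [hYdef, Finset.mul_sum, Real.exp_sum]
  have hint : Integrable (fun x => rexp (c * Y x)) P := by
    rw [hexpand, hP]
    exact pi_prod_integrable (integrable_exp_mul_sq_gaussian hc) n
  have hmgf : mgf Y P c = (√(1 - 2 * c)⁻¹) ^ n := by
    rw [mgf]
    calc ∫ x, rexp (c * Y x) ∂P = ∫ x : Fin n → ℝ, ∏ i, rexp (c * x i ^ 2) ∂P := by
          rw [hexpand]
      _ = (∫ y, rexp (c * y ^ 2) ∂(gaussianReal 0 1)) ^ n := by
          rw [hP]; exact pi_prod_integral (μ := gaussianReal 0 1) (fun y => rexp (c * y ^ 2)) n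
      _ = (√(1 - 2 * c)⁻¹) ^ n := by rw [integral_exp_mul_sq_gaussian hc]
  have hch := measure_ge_le_exp_mul_mgf (X := Y) (μ := P) aa hc0 hint
  rw [hmgf] at hch
  have hq0 : 0 < (s + t) / s := by positivity
  have hsqrt : √(1 - 2 * c)⁻¹ = (s + t) / s := by
    have h12 : 1 - 2 * c = (n : ℝ) / aa := by rw [hcdef]; ring
    rw [h12, inv_div, Real.sqrt_div (le_of_lt haa), haadef,
      Real.sqrt_sq (by positivity : (0:ℝ) ≤ s + t), hn', Real.sqrt_sq hs.le]
  have hbound : rexp (-c * aa) * (√(1 - 2 * c)⁻¹) ^ n ≤ rexp (-t ^ 2 / 2) := by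
    rw [hsqrt, ← Real.exp_log hq0, ← Real.exp_nat_mul, ← Real.exp_add]
    apply Real.exp_le_exp.mpr
    have hlog : Real.log ((s + t) / s) ≤ t / s := by
      have := Real.log_le_sub_one_of_pos hq0
      have heq : (s + t) / s - 1 = t / s := by field_simp; ring
      linarith [heq ▸ this]
    have hnlog : (n : ℝ) * Real.log ((s + t) / s) ≤ s * t := by
      have h1 : (n : ℝ) * Real.log ((s + t) / s) ≤ (n : ℝ) * (t / s) :=
        mul_le_mul_of_nonneg_left hlog (by positivity)
      have h2 : (n : ℝ) * (t / s) = s * t := by rw [hn']; field_simp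
      linarith
    have hca : c * aa = (aa - n) / 2 := by
      rw [hcdef]; field_simp
    have haan : aa - n = 2 * s * t + t ^ 2 := by rw [haadef, hn']; ring
    have : c * aa = s * t + t ^ 2 / 2 := by rw [hca, haan]; ring
    linarith
  calc (P {x | s + t < Real.sqrt (Y x)}).toReal
      ≤ (P {x | aa ≤ Y x}).toReal :=
        ENNReal.toReal_mono (measure_ne_top _ _) (measure_mono hsub)
    _ ≤ rexp (-c * aa) * (√(1 - 2 * c)⁻¹) ^ n := hch
    _ ≤ rexp (-t ^ 2 / 2) := hbound

private lemma sum_weights_le (n : ℕ) (hn : 3 ≤ n) {r : ℝ} (hr2 : r ≤ 1 / 2)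
    (hlog : (1 - 2 * r) * Real.log n < Real.exp 1) :
    ∑ i : Fin n, ((i : ℝ) + 1) ^ (-(2 * r)) ≤ 2 * Real.exp (Real.exp 1) * Real.log n := by
  have hn0 : (0:ℝ) < n := by positivity
  have hlogn : 1 ≤ Real.log n := by
    rw [Real.le_log_iff_exp_le hn0]
    calc rexp 1 ≤ 3 := by have := Real.exp_one_lt_d9; linarith
      _ ≤ (n:ℝ) := by exact_mod_cast hn
  have hterm : ∀ i : Fin n,
      ((i : ℝ) + 1) ^ (-(2 * r)) ≤ Real.exp (Real.exp 1) * ((i : ℝ) + 1)⁻¹ := by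
    intro i
    have hx : (0:ℝ) < (i : ℝ) + 1 := by positivity
    have h1 : ((i : ℝ) + 1) ^ (-(2 * r)) = ((i : ℝ) + 1) ^ (1 - 2 * r) * ((i : ℝ) + 1)⁻¹ := by
      rw [← Real.rpow_neg_one ((i:ℝ)+1), ← Real.rpow_add hx]
      congr 1
      ring
    rw [h1]
    apply mul_le_mul_of_nonneg_right _ (by positivity)
    have hle : ((i : ℝ) + 1) ≤ (n : ℝ) := by
      have h2 : (i : ℕ) + 1 ≤ n := i.isLt
      exact_mod_cast h2
    calc ((i : ℝ) + 1) ^ (1 - 2 * r) ≤ (n:ℝ) ^ (1 - 2 * r) :=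
          Real.rpow_le_rpow (by positivity) hle (by linarith)
      _ = rexp ((1 - 2*r) * Real.log n) := by rw [Real.rpow_def_of_pos hn0, mul_comm]
      _ ≤ rexp (rexp 1) := Real.exp_le_exp.mpr hlog.le
  calc ∑ i : Fin n, ((i : ℝ) + 1) ^ (-(2 * r))
      ≤ ∑ i : Fin n, Real.exp (Real.exp 1) * ((i : ℝ) + 1)⁻¹ :=
        Finset.sum_le_sum fun i _ => hterm i
    _ = Real.exp (Real.exp 1) * ∑ i : Fin n, ((i : ℝ) + 1)⁻¹ := by rw [← Finset.mul_sum]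
    _ ≤ Real.exp (Real.exp 1) * (2 * Real.log n) := by
        apply mul_le_mul_of_nonneg_left _ (Real.exp_nonneg _)
        have hh : ∑ i : Fin n, ((i : ℝ) + 1)⁻¹ = (harmonic n : ℝ) := by
          rw [Fin.sum_univ_eq_sum_range (fun k => ((k:ℝ)+1)⁻¹) n, harmonic]
          push_cast
          rfl
        rw [hh]
        have hhar := harmonic_le_one_add_log n
        linarith
    _ = 2 * Real.exp (Real.exp 1) * Real.log n := by ring


/-- `decRe x` is the non-increasing rearrangement of `(|x_1|, …, |x_n|)`
(indexed from `0`, so `decRe x i = x_[i+1]` in the paper's notation). -/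
noncomputable def decRe {n : ℕ} (x : Fin n → ℝ) : Fin n → ℝ :=
  fun i => |x (Tuple.sort (fun j => |x j|) i.rev)|

/-- The standard Gaussian measure `N(0, I_n)` on `ℝ^n`. -/
noncomputable def stdGaussian (n : ℕ) : Measure (Fin n → ℝ) :=
  Measure.pi fun _ => gaussianReal 0 1

/-- The Euclidean norm on `Fin n → ℝ`. -/
noncomputable def eucNorm {n : ℕ} (x : Fin n → ℝ) : ℝ :=
  Real.sqrt (∑ i : Fin n, x i ^ 2)

/-- Case IVb: there is a universal constant `C > 0` such that for `n ≥ 3`, `t > 0`,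
`r ∈ (1/4, 1/2]`, `p = 2(1-r)` with `(1-2r) ln n < e`, and `X` standard Gaussian in `ℝ^n`:
(i) `∑ i^{-2r} x_[i]^{2(p-1)} ≤ C (ln n) |x|^{2(p-1)}` for all `x` (Euclidean norm `|·|`);
(ii) with probability at least `1 - C exp(-t²/2)`, `|X| ≤ C n^{1/2} + t`, and consequently
`∑ i^{-2r} X_[i]^{2(p-1)} ≤ C (ln n) t^{2(p-1)}`. -/
theorem gradient_bound_case_IVb :
    ∃ C : ℝ, 0 < C ∧
      ∀ (n : ℕ) (t r p : ℝ), 3 ≤ n → 0 < t → 1 / 4 < r → r ≤ 1 / 2 →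
        p = 2 * (1 - r) → (1 - 2 * r) * Real.log n < Real.exp 1 →
        (∀ x : Fin n → ℝ,
          ∑ i : Fin n, ((i : ℝ) + 1) ^ (-(2 * r)) * decRe x i ^ (2 * (p - 1)) ≤
            C * Real.log n * eucNorm x ^ (2 * (p - 1))) ∧
        (1 - C * Real.exp (-t ^ 2 / 2) ≤
          ((stdGaussian n) {x |
            eucNorm x ≤ C * (n : ℝ) ^ ((1 : ℝ) / 2) + t ∧
            (∑ i : Fin n, ((i : ℝ) + 1) ^ (-(2 * r)) * decRe x i ^ (2 * (p - 1))) ≤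
              C * Real.log n * t ^ (2 * (p - 1))}).toReal) := by
  set E : ℝ := Real.exp (Real.exp 1) with hEdef
  have hexp1 : (2:ℝ) ≤ rexp 1 := by have := Real.add_one_le_exp (1:ℝ); linarith
  have hE2 : 2 ≤ E := by
    calc (2:ℝ) ≤ rexp 1 := hexp1
      _ ≤ rexp (rexp 1) := Real.exp_le_exp.mpr (by linarith)
  have hC1 : (1:ℝ) ≤ 5 * E ^ 2 := by nlinarith
  refine ⟨5 * E ^ 2, by positivity, ?_⟩
  intro n t r p hn ht hr1 hr2 hp hlog
  subst hp
  set a : ℝ := 2 * (2 * (1 - r) - 1) with hadef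
  have ha0 : 0 ≤ a := by rw [hadef]; linarith
  have ha1 : a ≤ 1 := by rw [hadef]; linarith
  have hn0 : (0:ℝ) < n := by positivity
  have hlogn : 1 ≤ Real.log n := by
    rw [Real.le_log_iff_exp_le hn0]
    calc rexp 1 ≤ 3 := by have := Real.exp_one_lt_d9; linarith
      _ ≤ (n:ℝ) := by exact_mod_cast hn
  have hdnn : ∀ (x : Fin n → ℝ) (i : Fin n), 0 ≤ decRe x i := fun x i => abs_nonneg _
  have hdle : ∀ (x : Fin n → ℝ) (i : Fin n), decRe x i ≤ eucNorm x := by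
    intro x i
    refine Real.abs_le_sqrt ?_
    exact Finset.single_le_sum (fun k _ => sq_nonneg (x k)) (Finset.mem_univ _)
  have hmain : ∀ x : Fin n → ℝ,
      ∑ i : Fin n, ((i : ℝ) + 1) ^ (-(2 * r)) * decRe x i ^ a ≤
        2 * E * Real.log n * eucNorm x ^ a := by
    intro x
    have hNnn : 0 ≤ eucNorm x := Real.sqrt_nonneg _
    calc ∑ i : Fin n, ((i : ℝ) + 1) ^ (-(2 * r)) * decRe x i ^ a
        ≤ ∑ i : Fin n, ((i : ℝ) + 1) ^ (-(2 * r)) * eucNorm x ^ a := by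
          refine Finset.sum_le_sum fun i _ => ?_
          exact mul_le_mul_of_nonneg_left
            (Real.rpow_le_rpow (hdnn x i) (hdle x i) ha0)
            (Real.rpow_nonneg (by positivity) _)
      _ = (∑ i : Fin n, ((i : ℝ) + 1) ^ (-(2 * r))) * eucNorm x ^ a := by
          rw [Finset.sum_mul]
      _ ≤ 2 * E * Real.log n * eucNorm x ^ a :=
          mul_le_mul_of_nonneg_right (sum_weights_le n hn hr2 hlog)
            (Real.rpow_nonneg hNnn _)
  constructor
  · intro x
    have hNnn : 0 ≤ eucNorm x := Real.sqrt_nonneg _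
    refine (hmain x).trans ?_
    have h2E : 2 * E ≤ 5 * E ^ 2 := by nlinarith
    have : 2 * E * Real.log n ≤ 5 * E ^ 2 * Real.log n :=
      mul_le_mul_of_nonneg_right h2E (by linarith)
    exact mul_le_mul_of_nonneg_right this (Real.rpow_nonneg hNnn _)
  · rcases le_or_gt t 1 with htle | ht1
    · have h3 : (1:ℝ)/2 ≤ rexp (-t^2/2) := by
        have he : rexp (-(1:ℝ)/2) ≤ rexp (-t^2/2) := Real.exp_le_exp.mpr (by nlinarith)
        have he2 : (1:ℝ)/2 ≤ rexp (-(1:ℝ)/2) := by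
          have := Real.add_one_le_exp (-(1:ℝ)/2); linarith
        linarith
      have h4 : (4:ℝ) ≤ E^2 := by nlinarith
      have h1 : 1 ≤ 5 * E ^ 2 * rexp (-t^2/2) := by
        nlinarith [mul_nonneg (by linarith : (0:ℝ) ≤ E^2 - 4)
          (by linarith : (0:ℝ) ≤ rexp (-t^2/2) - 1/2)]
      have h0 := ENNReal.toReal_nonneg (a := (stdGaussian n) {x |
            eucNorm x ≤ 5 * E ^ 2 * (n : ℝ) ^ ((1 : ℝ) / 2) + t ∧
            (∑ i : Fin n, ((i : ℝ) + 1) ^ (-(2 * r)) * decRe x i ^ a) ≤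
              5 * E ^ 2 * Real.log n * t ^ a})
      linarith
    · set s : ℝ := Real.sqrt n with hsdef
      have hs : 0 < s := Real.sqrt_pos.mpr hn0
      have hta : (1:ℝ) ≤ t ^ a := by
        calc (1:ℝ) = (1:ℝ) ^ a := (Real.one_rpow a).symm
          _ ≤ t ^ a := Real.rpow_le_rpow (by norm_num) ht1.le ha0
      have hsa : s ^ a ≤ E := by
        have h1 : s ^ a = (n:ℝ) ^ ((1/2 : ℝ) * a) := by
          rw [hsdef, Real.sqrt_eq_rpow, ← Real.rpow_mul hn0.le]
        rw [h1, Real.rpow_def_of_pos hn0]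
        apply Real.exp_le_exp.mpr
        have : Real.log n * (1/2 * a) = (1 - 2*r) * Real.log n := by
          rw [hadef]; ring
        rw [this]
        exact hlog.le
      have hst : (s + t) ^ a ≤ 2 * E * t ^ a := by
        have hmx : s + t ≤ 2 * max s t := by
          rcases le_total s t with h | h
          · have := max_eq_right h; rw [this]; linarith
          · have := max_eq_left h; rw [this]; linarith
        have hmx0 : 0 ≤ max s t := le_trans hs.le (le_max_left _ _)
        calc (s + t) ^ a ≤ (2 * max s t) ^ a :=
              Real.rpow_le_rpow (by positivity) hmx ha0
          _ = (2:ℝ) ^ a * (max s t) ^ a := Real.mul_rpow (by norm_num) hmx0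
          _ ≤ 2 * (E * t ^ a) := by
              have h2a : (2:ℝ) ^ a ≤ 2 := by
                calc (2:ℝ) ^ a ≤ (2:ℝ) ^ (1:ℝ) :=
                      Real.rpow_le_rpow_of_exponent_le (by norm_num) ha1
                  _ = 2 := Real.rpow_one 2
              have hmxa : (max s t) ^ a ≤ E * t ^ a := by
                rcases max_choice s t with h | h
                · rw [h]
                  calc s ^ a ≤ E := hsa
                    _ ≤ E * t ^ a := le_mul_of_one_le_right (by linarith) hta
                · rw [h]
                  exact le_mul_of_one_le_left (Real.rpow_nonneg (by linarith) _)
                      (by linarith)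
              exact mul_le_mul h2a hmxa (Real.rpow_nonneg hmx0 _) (by norm_num)
          _ = 2 * E * t ^ a := by ring
      -- subset
      have hBA : {x : Fin n → ℝ | eucNorm x ≤ s + t} ⊆ {x : Fin n → ℝ |
            eucNorm x ≤ 5 * E ^ 2 * (n : ℝ) ^ ((1 : ℝ) / 2) + t ∧
            (∑ i : Fin n, ((i : ℝ) + 1) ^ (-(2 * r)) * decRe x i ^ a) ≤
              5 * E ^ 2 * Real.log n * t ^ a} := by
        intro x hx
        have hx' : eucNorm x ≤ s + t := hx
        have hNnn : 0 ≤ eucNorm x := Real.sqrt_nonneg _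
        constructor
        · have hseq : (n:ℝ) ^ ((1:ℝ)/2) = s := by
            rw [hsdef, Real.sqrt_eq_rpow]
          rw [hseq]
          have : s ≤ 5 * E ^ 2 * s := le_mul_of_one_le_left hs.le hC1
          linarith
        · have h1 := hmain x
          have h2 : eucNorm x ^ a ≤ (s + t) ^ a := Real.rpow_le_rpow hNnn hx' ha0
          have h3 : eucNorm x ^ a ≤ 2 * E * t ^ a := h2.trans hst
          calc ∑ i : Fin n, ((i : ℝ) + 1) ^ (-(2 * r)) * decRe x i ^ a
              ≤ 2 * E * Real.log n * eucNorm x ^ a := h1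
            _ ≤ 2 * E * Real.log n * (2 * E * t ^ a) :=
                mul_le_mul_of_nonneg_left h3 (by positivity)
            _ = 4 * E ^ 2 * Real.log n * t ^ a := by ring
            _ ≤ 5 * E ^ 2 * Real.log n * t ^ a := by
                nlinarith [mul_nonneg (mul_nonneg (sq_nonneg E)
                  (by linarith : (0:ℝ) ≤ Real.log n)) (by positivity : (0:ℝ) ≤ t ^ a)]
      -- measurability of B
      have hcont : Continuous (fun x : Fin n → ℝ => eucNorm x) := by
        have : Continuous (fun x : Fin n → ℝ => ∑ i : Fin n, x i ^ 2) :=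
          continuous_finset_sum _ fun i _ => (continuous_apply i).pow 2
        exact Real.continuous_sqrt.comp this
      have hBmeas : MeasurableSet {x : Fin n → ℝ | eucNorm x ≤ s + t} :=
        measurableSet_le hcont.measurable measurable_const
      haveI : IsProbabilityMeasure (stdGaussian n) := by
        rw [_root_.stdGaussian]; infer_instance
      have hcompl : {x : Fin n → ℝ | eucNorm x ≤ s + t}ᶜ =
          {x : Fin n → ℝ | s + t < Real.sqrt (∑ i, x i ^ 2)} := by
        ext x
        simp only [Set.mem_compl_iff, Set.mem_setOf_eq, not_le]
        rfl
      have hcher := chernoff_norm n (by omega) ht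
      have hcher' : ((stdGaussian n) {x : Fin n → ℝ | eucNorm x ≤ s + t}ᶜ).toReal
          ≤ rexp (-t ^ 2 / 2) := by
        rw [hcompl]
        exact hcher
      have hadd : ((stdGaussian n) {x : Fin n → ℝ | eucNorm x ≤ s + t}).toReal
          + ((stdGaussian n) {x : Fin n → ℝ | eucNorm x ≤ s + t}ᶜ).toReal = 1 := by
        rw [← ENNReal.toReal_add (measure_ne_top _ _) (measure_ne_top _ _),
          measure_add_measure_compl hBmeas, measure_univ, ENNReal.toReal_one]
      have hmono : ((stdGaussian n) {x : Fin n → ℝ | eucNorm x ≤ s + t}).toReal ≤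
          ((stdGaussian n) {x : Fin n → ℝ |
            eucNorm x ≤ 5 * E ^ 2 * (n : ℝ) ^ ((1 : ℝ) / 2) + t ∧
            (∑ i : Fin n, ((i : ℝ) + 1) ^ (-(2 * r)) * decRe x i ^ a) ≤
              5 * E ^ 2 * Real.log n * t ^ a}).toReal :=
        ENNReal.toReal_mono (measure_ne_top _ _) (measure_mono hBA)
      have hCexp : rexp (-t ^ 2 / 2) ≤ 5 * E ^ 2 * rexp (-t ^ 2 / 2) :=
        le_mul_of_one_le_left (Real.exp_nonneg _) hC1
      linarith
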